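/- For a Tychonoff space X, if the bi-compact-open topology space C_kh(X) is regular, then the set lc(X) of points of X possessing a compact neighborhood is G_δ-dense in X. -/

import Mathlib

open Set TopologicalSpace Filter

/-- The open-point topology on `C(X, ℝ)`, generated by the sets
`[U, r]⁻ = {f | ∃ x ∈ U, f x = r}` for `U` open in `X` and `r : ℝ`. -/
def openPointTop (X : Type*) [TopologicalSpace X] : TopologicalSpace C(X, ℝ) :=
  generateFrom {S | ∃ (U : Set X) (r : ℝ), IsOpen U ∧ S = {f : C(X, ℝ) | ∃ x ∈ U, f x = r}}

/-- The point-open topology (topology of pointwise convergence) on `C(X, ℝ)`. -/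
def pointOpenTop (X : Type*) [TopologicalSpace X] : TopologicalSpace C(X, ℝ) :=
  generateFrom {S | ∃ (x : X) (V : Set ℝ), IsOpen V ∧ S = {f : C(X, ℝ) | f x ∈ V}}

/-- The bi-compact-open topology `kh`: the join (coarsest common refinement) of the
compact-open topology and the open-point topology.  In Mathlib's order on
`TopologicalSpace` (where smaller = finer), this join is `⊓`. -/
def biCompactOpenTop (X : Type*) [TopologicalSpace X] : TopologicalSpace C(X, ℝ) :=
  ContinuousMap.compactOpen ⊓ openPointTop X

/-- The bi-point-open topology `ph`: the join of the point-open topology and the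
open-point topology. -/
def biPointOpenTop (X : Type*) [TopologicalSpace X] : TopologicalSpace C(X, ℝ) :=
  pointOpenTop X ⊓ openPointTop X

/-- `lc X` is the set of points of `X` having a compact neighborhood. -/
def lcSet (X : Type*) [TopologicalSpace X] : Set X :=
  {x | ∃ K : Set X, IsCompact K ∧ K ∈ nhds x}

/-- A set `A` is `Gδ`-dense if every nonempty `Gδ`-set meets it. -/
def GdeltaDense {X : Type*} [TopologicalSpace X] (A : Set X) : Prop :=
  ∀ G : Set X, IsGδ G → G.Nonempty → (G ∩ A).Nonempty

/-- A nonempty set `B` is an `R`-set if countably many continuous real functions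
map it onto all of `ℝ`. -/
def IsRSet {X : Type*} [TopologicalSpace X] (B : Set X) : Prop :=
  B.Nonempty ∧ ∃ f : ℕ → C(X, ℝ), (⋃ n, (f n) '' B) = Set.univ

/-- `X` is `R`-separable if there is a countable collection of `R`-sets such that
every nonempty open set contains a member of the collection. -/
def RSeparable (X : Type*) [TopologicalSpace X] : Prop :=
  ∃ S : ℕ → Set X, (∀ n, IsRSet (S n)) ∧
    ∀ U : Set X, IsOpen U → U.Nonempty → ∃ n, S n ⊆ U

/-- A topology is submetrizable if it is finer than some metrizable topology. -/
def Submetrizable (α : Type*) [t : TopologicalSpace α] : Prop :=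
  ∃ t' : TopologicalSpace α, @MetrizableSpace α t' ∧ t ≤ t'

/-- `X` is hemicompact if there is a sequence of compact sets cofinal in the
compact subsets of `X`. -/
def Hemicompact (X : Type*) [TopologicalSpace X] : Prop :=
  ∃ K : ℕ → Set X, (∀ n, IsCompact (K n)) ∧ ∀ A : Set X, IsCompact A → ∃ n, A ⊆ K n

/-- `X` is almost σ-compact if it has a dense σ-compact subset. -/
def AlmostSigmaCompact (X : Type*) [TopologicalSpace X] : Prop :=
  ∃ K : ℕ → Set X, (∀ n, IsCompact (K n)) ∧ Dense (⋃ n, K n)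

open Topology

section
set_option linter.unusedSectionVars false

section Aux

variable {X : Type*} [TopologicalSpace X]

/-- subbasis family for the compact-open topology (matching mathlib's definition). -/
def coFam (X : Type*) [TopologicalSpace X] : Set (Set C(X, ℝ)) :=
  Set.image2 (fun K U ↦ {f : C(X, ℝ) | Set.MapsTo f K U}) {K : Set X | IsCompact K}
    {U : Set ℝ | IsOpen U}

/-- subbasis family for the open-point topology. -/
def hFam (X : Type*) [TopologicalSpace X] : Set (Set C(X, ℝ)) :=
  {S | ∃ (U : Set X) (r : ℝ), IsOpen U ∧ S = {f : C(X, ℝ) | ∃ x ∈ U, f x = r}}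

lemma khEq : biCompactOpenTop X = generateFrom (coFam X ∪ hFam X) := by
  rw [coFam, hFam, generateFrom_union]
  rfl

lemma khBasis : @IsTopologicalBasis C(X, ℝ) (biCompactOpenTop X)
    ((fun f => ⋂₀ f) '' {f : Set (Set C(X, ℝ)) | f.Finite ∧ f ⊆ coFam X ∪ hFam X}) :=
  @isTopologicalBasis_of_subbasis C(X, ℝ) (biCompactOpenTop X) _ khEq


lemma margin {K : Set X} (hK : IsCompact K) {V : Set ℝ} (hV : IsOpen V) (f : C(X, ℝ))
    (hf : Set.MapsTo f K V) :
    ∃ ε > 0, ∀ h : C(X, ℝ), (∀ x ∈ K, |h x - f x| < ε) → Set.MapsTo h K V := by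
  have himg : IsCompact (f '' K) := hK.image f.continuous
  have hsub : f '' K ⊆ V := Set.mapsTo_iff_image_subset.1 hf
  obtain ⟨δ, hδ, hthick⟩ := himg.exists_thickening_subset_open hV hsub
  refine ⟨δ, hδ, fun h hh x hx => hthick ?_⟩
  rw [Metric.mem_thickening_iff]
  exact ⟨f x, Set.mem_image_of_mem _ hx, by simpa [Real.dist_eq] using hh x hx⟩

lemma coList {F : Set (Set C(X, ℝ))} (hfin : F.Finite) :
    F ⊆ coFam X → ∃ l : List (Set X × Set ℝ),
      (∀ p ∈ l, IsCompact p.1 ∧ IsOpen p.2) ∧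
      ⋂₀ F = {h : C(X, ℝ) | ∀ p ∈ l, Set.MapsTo h p.1 p.2} := by
  refine Set.Finite.induction_on
    (motive := fun F _ => F ⊆ coFam X → ∃ l : List (Set X × Set ℝ),
      (∀ p ∈ l, IsCompact p.1 ∧ IsOpen p.2) ∧
      ⋂₀ F = {h : C(X, ℝ) | ∀ p ∈ l, Set.MapsTo h p.1 p.2}) F hfin
    (fun _ => ⟨[], by simp, by simp⟩) ?_
  rintro a s ha hs IH hsub
  obtain ⟨K, hK, U, hU, rfl⟩ := hsub (Set.mem_insert _ _)
  obtain ⟨l, hl, hls⟩ := IH fun t ht => hsub (Set.mem_insert_of_mem _ ht)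
  classical
  refine ⟨(K, U) :: l, ?_, ?_⟩
  · intro p hp
    rcases List.mem_cons.1 hp with rfl | hp
    · exact ⟨hK, hU⟩
    · exact hl p hp
  · rw [Set.sInter_insert, hls]
    ext h
    simp [Set.mem_setOf_eq]

lemma hList {F : Set (Set C(X, ℝ))} (hfin : F.Finite) :
    F ⊆ hFam X → ∃ l : List (Set X × ℝ),
      (∀ p ∈ l, IsOpen p.1) ∧
      ⋂₀ F = {h : C(X, ℝ) | ∀ p ∈ l, ∃ x ∈ p.1, h x = p.2} := by
  refine Set.Finite.induction_on
    (motive := fun F _ => F ⊆ hFam X → ∃ l : List (Set X × ℝ),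
      (∀ p ∈ l, IsOpen p.1) ∧
      ⋂₀ F = {h : C(X, ℝ) | ∀ p ∈ l, ∃ x ∈ p.1, h x = p.2}) F hfin
    (fun _ => ⟨[], by simp, by simp⟩) ?_
  rintro a s ha hs IH hsub
  obtain ⟨U, r, hU, rfl⟩ := hsub (Set.mem_insert _ _)
  obtain ⟨l, hl, hls⟩ := IH fun t ht => hsub (Set.mem_insert_of_mem _ ht)
  refine ⟨(U, r) :: l, ?_, ?_⟩
  · intro p hp
    rcases List.mem_cons.1 hp with rfl | hp
    · exact hU
    · exact hl p hp
  · rw [Set.sInter_insert, hls]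
    ext h
    simp [Set.mem_setOf_eq]

lemma coBall (f : C(X, ℝ)) :
    ∀ l : List (Set X × Set ℝ), (∀ p ∈ l, IsCompact p.1 ∧ IsOpen p.2) →
      (∀ p ∈ l, Set.MapsTo f p.1 p.2) →
      ∃ (K : Set X) (ε : ℝ), IsCompact K ∧ 0 < ε ∧
        ∀ h : C(X, ℝ), (∀ x ∈ K, |h x - f x| < ε) → ∀ p ∈ l, Set.MapsTo h p.1 p.2
  | [], _, _ => ⟨∅, 1, isCompact_empty, one_pos, by simp⟩
  | p :: l, hl, hf => by
    obtain ⟨hK, hU⟩ := hl p List.mem_cons_self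
    obtain ⟨ε₁, hε₁, hm⟩ := margin hK hU f (hf p List.mem_cons_self)
    obtain ⟨K₂, ε₂, hK₂, hε₂, hm₂⟩ := coBall f l (fun q hq => hl q (List.mem_cons_of_mem _ hq))
      (fun q hq => hf q (List.mem_cons_of_mem _ hq))
    refine ⟨p.1 ∪ K₂, min ε₁ ε₂, hK.union hK₂, lt_min hε₁ hε₂, fun h hh q hq => ?_⟩
    rcases List.mem_cons.1 hq with rfl | hq
    · exact hm h fun x hx => lt_of_lt_of_le (hh x (Set.mem_union_left _ hx)) (min_le_left _ _)
    · exact hm₂ h (fun x hx => lt_of_lt_of_le (hh x (Set.mem_union_right _ hx)) (min_le_right _ _))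
        q hq

lemma nhds_decomp (g : C(X, ℝ)) {t : Set C(X, ℝ)} (ht : t ∈ @nhds _ (biCompactOpenTop X) g) :
    ∃ (K : Set X) (ε : ℝ) (l : List (Set X × ℝ)), IsCompact K ∧ 0 < ε ∧
      (∀ p ∈ l, IsOpen p.1 ∧ ∃ x ∈ p.1, g x = p.2) ∧
      {h : C(X, ℝ) | (∀ x ∈ K, |h x - g x| < ε) ∧ ∀ p ∈ l, ∃ x ∈ p.1, h x = p.2} ⊆ t := by
  obtain ⟨b, ⟨F, ⟨hFfin, hFsub⟩, rfl⟩, hgb, hbt⟩ :=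
    (@IsTopologicalBasis.mem_nhds_iff C(X, ℝ) (biCompactOpenTop X) g t _ khBasis).1 ht
  have hsplit : F = (F ∩ coFam X) ∪ (F ∩ hFam X) := by
    ext s; constructor
    · intro hs
      rcases hFsub hs with h | h
      · exact Or.inl ⟨hs, h⟩
      · exact Or.inr ⟨hs, h⟩
    · rintro (⟨h, _⟩ | ⟨h, _⟩) <;> exact h
  obtain ⟨lco, hlco, hcoEq⟩ := coList (hFfin.subset Set.inter_subset_left)
    (Set.inter_subset_right)
  obtain ⟨lh, hlh, hhEq⟩ := hList (hFfin.subset Set.inter_subset_left)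
    (Set.inter_subset_right)
  have hbEq : ⋂₀ F = (⋂₀ (F ∩ coFam X)) ∩ (⋂₀ (F ∩ hFam X)) := by
    conv_lhs => rw [hsplit]
    exact Set.sInter_union _ _
  have hg2 : g ∈ (⋂₀ (F ∩ coFam X)) ∩ (⋂₀ (F ∩ hFam X)) := by
    rw [← hbEq]; exact hgb
  rw [hcoEq, hhEq] at hg2
  obtain ⟨hgco, hgh⟩ := hg2
  obtain ⟨K, ε, hK, hε, hball⟩ := coBall g lco hlco hgco
  refine ⟨K, ε, lh, hK, hε, fun p hp => ⟨hlh p hp, hgh p hp⟩, fun h hh => ?_⟩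
  apply hbt
  show h ∈ ⋂₀ F
  rw [hbEq, hcoEq, hhEq]
  exact ⟨hball h hh.1, hh.2⟩


section Sep

variable [T2Space X] [CompletelyRegularSpace X]

lemma exists_sep {z : X} {D : Set X} (hD : IsClosed D) (hz : z ∉ D) :
    ∃ β : C(X, ℝ), β z = 1 ∧ ∀ x ∈ D, β x = 0 := by
  obtain ⟨q, hqc, hq0, hq1⟩ := CompletelyRegularSpace.completely_regular z D hD hz
  refine ⟨⟨fun x => 1 - (q x : ℝ), by fun_prop⟩, ?_, ?_⟩
  · simp [hq0]
  · intro x hx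
    have : q x = 1 := hq1 hx
    simp [this]

lemma exists_fresh {E : Set X} (hE : IsOpen E) {e : X} (he : e ∈ E) (hnl : e ∉ lcSet X)
    {Q : Set X} (hQ : IsCompact Q) (S : Finset X) : ∃ z, z ∈ E ∧ z ∉ Q ∧ z ∉ (S : Set X) := by
  by_contra hc
  push_neg at hc
  apply hnl
  refine ⟨Q ∪ (S : Set X), hQ.union S.finite_toSet.isCompact, ?_⟩
  rw [mem_nhds_iff]
  refine ⟨E, fun z hz => ?_, hE, he⟩
  by_cases hzQ : z ∈ Q
  · exact Set.mem_union_left _ hzQ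
  · exact Set.mem_union_right _ (hc z hz hzQ)

lemma witness_list (g : C(X, ℝ)) :
    ∀ l : List (Set X × ℝ), ∃ S : Finset X,
      ∀ p ∈ l, (∃ x ∈ p.1, g x = p.2) → ∃ x, x ∈ p.1 ∧ x ∈ (S : Set X) ∧ g x = p.2
  | [] => ⟨∅, by simp⟩
  | p :: l => by
    classical
    obtain ⟨S, hS⟩ := witness_list g l
    by_cases h : ∃ x ∈ p.1, g x = p.2
    · obtain ⟨x, hx1, hx2⟩ := h
      refine ⟨insert x S, fun q hq hgq => ?_⟩
      rcases List.mem_cons.1 hq with rfl | hq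
      · exact ⟨x, hx1, by simp, hx2⟩
      · obtain ⟨y, hy1, hy2, hy3⟩ := hS q hq hgq
        exact ⟨y, hy1, by simp [hy2], hy3⟩
    · refine ⟨S, fun q hq hgq => ?_⟩
      rcases List.mem_cons.1 hq with rfl | hq
      · exact absurd hgq h
      · exact hS q hq hgq

lemma rec_construct (g : C(X, ℝ)) {P : Set X} (hP : IsCompact P) :
    ∀ l : List (Set X × ℝ),
      (∀ p ∈ l, IsOpen p.1 ∧ ((∃ x, x ∈ p.1 ∩ P ∧ g x = p.2) ∨ ∃ e ∈ p.1, e ∉ lcSet X)) →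
      ∃ (F : C(X, ℝ)) (Z : Finset X), (∀ x ∈ P, F x = g x) ∧
        ∀ p ∈ l, ∃ x ∈ p.1, F x = p.2 ∧ (x ∈ P ∨ x ∈ (Z : Set X))
  | [], _ => ⟨g, ∅, fun _ _ => rfl, by simp⟩
  | p :: l, hl => by
    classical
    obtain ⟨F, Z, hEq, hhits⟩ := rec_construct g hP l
      (fun q hq => hl q (List.mem_cons_of_mem _ hq))
    obtain ⟨hpo, hcase⟩ := hl p List.mem_cons_self
    rcases hcase with ⟨x, ⟨hx1, hxP⟩, hgx⟩ | ⟨e, he, hnl⟩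
    · refine ⟨F, Z, hEq, fun q hq => ?_⟩
      rcases List.mem_cons.1 hq with rfl | hq
      · exact ⟨x, hx1, by rw [hEq x hxP, hgx], Or.inl hxP⟩
      · exact hhits q hq
    · obtain ⟨z, hzE, hzQ, hzS⟩ := exists_fresh hpo he hnl hP Z
      have hD : IsClosed (P ∪ (Z : Set X)) := hP.isClosed.union Z.finite_toSet.isClosed
      have hzD : z ∉ P ∪ (Z : Set X) := by
        rintro (h | h)
        · exact hzQ h
        · exact hzS h
      obtain ⟨β, hβz, hβ0⟩ := exists_sep hD hzD
      refine ⟨F + (p.2 - F z) • β, insert z Z, ?_, ?_⟩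
      · intro x hx
        have : β x = 0 := hβ0 x (Set.mem_union_left _ hx)
        simp [this, hEq x hx]
      · intro q hq
        rcases List.mem_cons.1 hq with rfl | hq
        · refine ⟨z, hzE, ?_, Or.inr (by simp)⟩
          simp [hβz]
        · obtain ⟨x, hx1, hx2, hor⟩ := hhits q hq
          have : β x = 0 := by
            rcases hor with h | h
            · exact hβ0 x (Set.mem_union_left _ h)
            · exact hβ0 x (Set.mem_union_right _ h)
          refine ⟨x, hx1, by simp [this, hx2], ?_⟩
          rcases hor with h | h
          · exact Or.inl h
          · exact Or.inr (by simp [h])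


lemma lemB (f g : C(X, ℝ)) {K : Set X} (hK : IsCompact K) {ε : ℝ} (hε : 0 < ε)
    (l : List (Set X × ℝ)) (hlo : ∀ p ∈ l, IsOpen p.1)
    (hg : ∀ x ∈ K, |g x - f x| < ε)
    (hcond : ∀ p ∈ l, (∃ x ∈ p.1, g x = p.2) ∨ ∃ e ∈ p.1, e ∉ lcSet X) :
    g ∈ @closure _ (biCompactOpenTop X)
      {h : C(X, ℝ) | (∀ x ∈ K, |h x - f x| < ε) ∧ ∀ p ∈ l, ∃ x ∈ p.1, h x = p.2} := by
  classical
  refine (@mem_closure_iff_nhds C(X, ℝ) (biCompactOpenTop X) _ _).2 ?_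
  intro t ht
  obtain ⟨K', ε', l', hK', hε', hl', hsub⟩ := nhds_decomp g ht
  obtain ⟨S1, hS1⟩ := witness_list g l
  obtain ⟨S2, hS2⟩ := witness_list g l'
  set P : Set X := (K ∪ K') ∪ ((S1 ∪ S2 : Finset X) : Set X) with hPdef
  have hP : IsCompact P := (hK.union hK').union (S1 ∪ S2).finite_toSet.isCompact
  have hcond2 : ∀ p ∈ l ++ l', IsOpen p.1 ∧
      ((∃ x, x ∈ p.1 ∩ P ∧ g x = p.2) ∨ ∃ e ∈ p.1, e ∉ lcSet X) := by
    intro p hp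
    rcases List.mem_append.1 hp with hp | hp
    · refine ⟨hlo p hp, ?_⟩
      rcases hcond p hp with hgood | hbad
      · obtain ⟨x, hx1, hx2, hx3⟩ := hS1 p hp hgood
        refine Or.inl ⟨x, ⟨hx1, ?_⟩, hx3⟩
        exact Set.mem_union_right _ (by simp [Finset.coe_union]; exact Or.inl hx2)
      · exact Or.inr hbad
    · refine ⟨(hl' p hp).1, ?_⟩
      obtain ⟨x, hx1, hx2, hx3⟩ := hS2 p hp (hl' p hp).2
      refine Or.inl ⟨x, ⟨hx1, ?_⟩, hx3⟩
      exact Set.mem_union_right _ (by simp [Finset.coe_union]; exact Or.inr hx2)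
  obtain ⟨F, Z, hEq, hhits⟩ := rec_construct g hP (l ++ l') hcond2
  have hFK : ∀ x ∈ K, F x = g x := fun x hx =>
    hEq x (Set.mem_union_left _ (Set.mem_union_left _ hx))
  have hFK' : ∀ x ∈ K', F x = g x := fun x hx =>
    hEq x (Set.mem_union_left _ (Set.mem_union_right _ hx))
  refine ⟨F, ?_, ?_, ?_⟩
  · apply hsub
    constructor
    · intro x hx
      rw [hFK' x hx]
      simpa using hε'
    · intro p hp
      obtain ⟨x, hx1, hx2, _⟩ := hhits p (List.mem_append_right _ hp)
      exact ⟨x, hx1, hx2⟩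
  · intro x hx
    rw [hFK x hx]
    exact hg x hx
  · intro p hp
    obtain ⟨x, hx1, hx2, _⟩ := hhits p (List.mem_append_left _ hp)
    exact ⟨x, hx1, hx2⟩

end Sep

lemma exists_eta (l : List (Set X × ℝ)) :
    ∃ η : ℝ, 0 < η ∧ η ≤ 1 ∧ ∀ p ∈ l, 0 < p.2 → η ≤ p.2 := by
  induction l with
  | nil => exact ⟨1, one_pos, le_refl _, by simp⟩
  | cons p l IH =>
    obtain ⟨η, hη0, hη1, hηr⟩ := IH
    by_cases h : 0 < p.2
    · refine ⟨min η p.2, lt_min hη0 h, le_trans (min_le_left _ _) hη1, fun q hq hq2 => ?_⟩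
      rcases List.mem_cons.1 hq with rfl | hq
      · exact min_le_right _ _
      · exact le_trans (min_le_left _ _) (hηr q hq hq2)
    · refine ⟨η, hη0, hη1, fun q hq hq2 => ?_⟩
      rcases List.mem_cons.1 hq with rfl | hq
      · exact absurd hq2 h
      · exact hηr q hq hq2

end Aux

end

theorem stmt4 {X : Type*} [TopologicalSpace X] [T2Space X] [CompletelyRegularSpace X]
    (hreg : @RegularSpace C(X, ℝ) (biCompactOpenTop X)) :
    GdeltaDense (lcSet X) := by
  classical
  intro G hG hGne
  by_contra hcon
  rw [Set.not_nonempty_iff_eq_empty] at hcon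
  obtain ⟨p, hp⟩ := hGne
  obtain ⟨T, hTo, hTc, rfl⟩ := hG
  obtain ⟨u, hu⟩ := (hTc.insert Set.univ).exists_eq_range (Set.insert_nonempty _ _)
  have huo : ∀ n, IsOpen (u n) := by
    intro n
    have hm : u n ∈ insert Set.univ T := by rw [hu]; exact Set.mem_range_self n
    rcases Set.mem_insert_iff.1 hm with h | h
    · rw [h]; exact isOpen_univ
    · exact hTo _ h
  have hpu : ∀ n, p ∈ u n := by
    intro n
    have h1 : p ∈ ⋂₀ insert Set.univ T := by
      rw [Set.sInter_insert]
      exact ⟨Set.mem_univ _, hp⟩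
    rw [hu, Set.mem_sInter] at h1
    exact h1 _ ⟨n, rfl⟩
  have hsubG : ∀ x, (∀ n, x ∈ u n) → x ∈ ⋂₀ T := by
    intro x hx t ht
    have hx2 : x ∈ ⋂₀ insert Set.univ T := by
      rw [hu, Set.mem_sInter]
      rintro s ⟨n, rfl⟩
      exact hx n
    exact hx2 _ (Set.mem_insert_of_mem _ ht)
  have hnotlc : ∀ x, x ∈ ⋂₀ T → x ∉ lcSet X := by
    intro x hx hlc
    have hmem : x ∈ ⋂₀ T ∩ lcSet X := ⟨hx, hlc⟩
    rw [hcon] at hmem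
    exact hmem
  -- separating functions
  have hsep : ∀ n : ℕ, ∃ q : X → unitInterval, Continuous q ∧ q p = 0 ∧ Set.EqOn q 1 (u n)ᶜ :=
    fun n => CompletelyRegularSpace.completely_regular p (u n)ᶜ (huo n).isClosed_compl
      (fun hc => hc (hpu n))
  choose q hqc hqp hq1 using hsep
  -- the function f
  have hbd : ∀ (n : ℕ) (x : X), ‖(1 / 2 : ℝ) ^ (n + 1) * (q n x : ℝ)‖ ≤ (1 / 2 : ℝ) ^ (n + 1) := by
    intro n x
    rw [norm_mul]
    have h1 : ‖(1 / 2 : ℝ) ^ (n + 1)‖ = (1 / 2 : ℝ) ^ (n + 1) := by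
      rw [Real.norm_eq_abs, abs_of_nonneg (by positivity)]
    have h2 : ‖(q n x : ℝ)‖ ≤ 1 := by
      rw [Real.norm_eq_abs, abs_of_nonneg (q n x).2.1]
      exact (q n x).2.2
    calc ‖(1 / 2 : ℝ) ^ (n + 1)‖ * ‖(q n x : ℝ)‖
        ≤ ‖(1 / 2 : ℝ) ^ (n + 1)‖ * 1 := by
          exact mul_le_mul_of_nonneg_left h2 (norm_nonneg _)
      _ = (1 / 2 : ℝ) ^ (n + 1) := by rw [mul_one, h1]
  have hsumm : Summable fun n : ℕ => (1 / 2 : ℝ) ^ (n + 1) := by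
    simpa [pow_succ] using summable_geometric_two.mul_right (1 / 2 : ℝ)
  have hfc : Continuous fun x : X => ∑' n : ℕ, (1 / 2 : ℝ) ^ (n + 1) * (q n x : ℝ) :=
    continuous_tsum (fun n => continuous_const.mul (continuous_subtype_val.comp (hqc n)))
      hsumm hbd
  set f : C(X, ℝ) := ⟨fun x => ∑' n : ℕ, (1 / 2 : ℝ) ^ (n + 1) * (q n x : ℝ), hfc⟩ with hfdef
  have hfapp : ∀ x, f x = ∑' n : ℕ, (1 / 2 : ℝ) ^ (n + 1) * (q n x : ℝ) := fun x => rfl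
  have hterm_nonneg : ∀ (x : X) (n : ℕ), 0 ≤ (1 / 2 : ℝ) ^ (n + 1) * (q n x : ℝ) :=
    fun x n => mul_nonneg (by positivity) (q n x).2.1
  have hsx : ∀ x : X, Summable fun n : ℕ => (1 / 2 : ℝ) ^ (n + 1) * (q n x : ℝ) := by
    intro x
    refine Summable.of_nonneg_of_le (hterm_nonneg x) (fun n => ?_) hsumm
    calc (1 / 2 : ℝ) ^ (n + 1) * (q n x : ℝ) ≤ (1 / 2 : ℝ) ^ (n + 1) * 1 :=
          mul_le_mul_of_nonneg_left (q n x).2.2 (by positivity)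
      _ = (1 / 2 : ℝ) ^ (n + 1) := mul_one _
  have hf0 : ∀ x, 0 ≤ f x := fun x => tsum_nonneg (hterm_nonneg x)
  have hfp : f p = 0 := by
    rw [hfapp]
    have hz : ∀ n : ℕ, (1 / 2 : ℝ) ^ (n + 1) * (q n p : ℝ) = 0 := by
      intro n; rw [hqp n]; simp
    rw [tsum_congr hz, tsum_zero]
  have hfz : ∀ x, f x = 0 → x ∈ ⋂₀ T := by
    intro x hx
    apply hsubG
    intro n
    have hle : (1 / 2 : ℝ) ^ (n + 1) * (q n x : ℝ) ≤ 0 := by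
      rw [← hx, hfapp]
      exact Summable.le_tsum (hsx x) n (fun j _ => hterm_nonneg x j)
    have heq0 : (1 / 2 : ℝ) ^ (n + 1) * (q n x : ℝ) = 0 :=
      le_antisymm hle (hterm_nonneg x n)
    have hq0 : (q n x : ℝ) = 0 := by
      rcases mul_eq_zero.1 heq0 with h | h
      · exact absurd h (by positivity)
      · exact h
    by_contra hxn
    have h1 : q n x = 1 := hq1 n hxn
    rw [h1] at hq0
    norm_num at hq0
  -- the open set O
  set O : Set C(X, ℝ) := {h : C(X, ℝ) | ∃ x : X, h x = 0} with hOdef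
  have hOopen : IsOpen[biCompactOpenTop X] O := by
    have h1 : IsOpen[openPointTop X] O := by
      apply TopologicalSpace.isOpen_generateFrom_of_mem
      refine ⟨Set.univ, 0, isOpen_univ, ?_⟩
      rw [hOdef]
      ext h; simp
    exact h1.mono inf_le_right
  have hfO : f ∈ O := ⟨p, hfp⟩
  have hOnhds : O ∈ @nhds _ (biCompactOpenTop X) f :=
    @IsOpen.mem_nhds C(X, ℝ) (biCompactOpenTop X) _ _ hOopen hfO
  obtain ⟨t', ht'n, ht'c, ht'O⟩ :=
    @exists_mem_nhds_isClosed_subset C(X, ℝ) (biCompactOpenTop X) hreg f O hOnhds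
  obtain ⟨K, ε, l, hK, hε, hfl, hsubB⟩ := nhds_decomp f ht'n
  obtain ⟨η, hη0, hη1, hηr⟩ := exists_eta (X := X) l
  set ψ : C(X, ℝ) := ⟨fun x => max (1 - f x / η) 0,
    (continuous_const.sub (f.continuous.div_const η)).max continuous_const⟩ with hψdef
  have hψ0 : ∀ x, 0 ≤ ψ x := fun x => le_max_right _ _
  have hψ1 : ∀ x, ψ x ≤ 1 := by
    intro x
    apply max_le _ zero_le_one
    have : 0 ≤ f x / η := div_nonneg (hf0 x) hη0.le
    linarith
  set g : C(X, ℝ) := f + (ε / 2) • ψ with hgdef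
  have hgapp : ∀ x, g x = f x + (ε / 2) * ψ x := by
    intro x
    rw [hgdef]
    simp
  have hgf : ∀ x, |g x - f x| < ε := by
    intro x
    rw [hgapp]
    have h1 : 0 ≤ (ε / 2) * ψ x := mul_nonneg (by positivity) (hψ0 x)
    have h2 : (ε / 2) * ψ x ≤ ε / 2 * 1 := mul_le_mul_of_nonneg_left (hψ1 x) (by positivity)
    rw [add_sub_cancel_left, abs_of_nonneg h1]
    linarith
  have hgpos : ∀ x, 0 < g x := by
    intro x
    rw [hgapp]
    rcases eq_or_lt_of_le (hf0 x) with h | h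
    · have hψx : ψ x = 1 := by
        show max (1 - f x / η) 0 = 1
        rw [← h]
        norm_num
      rw [← h, hψx]
      simpa using half_pos hε
    · have := mul_nonneg (le_of_lt (half_pos hε)) (hψ0 x)
      linarith
  have hcondB : ∀ p' ∈ l, (∃ x ∈ p'.1, g x = p'.2) ∨ ∃ e ∈ p'.1, e ∉ lcSet X := by
    intro p' hp'
    obtain ⟨hop, w, hw, hfw⟩ := hfl p' hp'
    rcases lt_trichotomy p'.2 0 with hr | hr | hr
    · exact absurd (hfw ▸ hf0 w) (not_le.2 hr)
    · refine Or.inr ⟨w, hw, ?_⟩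
      apply hnotlc
      apply hfz
      rw [hfw, hr]
    · refine Or.inl ⟨w, hw, ?_⟩
      have hψw : ψ w = 0 := by
        show max (1 - f w / η) 0 = 0
        apply max_eq_right
        have hle : η ≤ f w := by rw [hfw]; exact hηr p' hp' hr
        have : 1 ≤ f w / η := (one_le_div hη0).2 hle
        linarith
      rw [hgapp, hψw, mul_zero, add_zero, hfw]
  have hclose := lemB f g hK hε l (fun p' hp' => (hfl p' hp').1) (fun x _ => hgf x) hcondB
  have hgO : g ∈ O :=
    ht'O ((@closure_minimal C(X, ℝ) (biCompactOpenTop X) _ _ hsubB ht'c) hclose)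
  obtain ⟨x, hx⟩ := hgO
  exact (hgpos x).ne' hx
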